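/- arXiv:2006.04994 — 4 statements merged into one kernel-verified Lean document; each statement's English description precedes it below -/
import Mathlib

section
/- Let m > 2, r₀ > 0, 0 ≤ A < r₀^{m−1}, and set K₁ = (m−2)(r₀^{m−1} − A)/(A + (m−2)r₀^{m−1}). For any v ≥ r₀ and any real s with (1+s²)^{1/2} ≥ 1, one has v·(1+s²)^{1/2} − A v^{2−m} ≥ K₁ (v·(1+s²)^{1/2} + (A/(m−2)) v^{2−m}). -/
theorem stmt_11 (m r₀ A : ℝ) (hm : 2 < m) (hr₀ : 0 < r₀)
    (hA : 0 ≤ A) (hA' : A < r₀ ^ (m - 1))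
    (K₁ : ℝ)
    (hK₁ : K₁ = (m - 2) * (r₀ ^ (m - 1) - A) / (A + (m - 2) * r₀ ^ (m - 1)))
    (v s : ℝ) (hv : r₀ ≤ v) :
    K₁ * (v * Real.sqrt (1 + s ^ 2) + (A / (m - 2)) * v ^ (2 - m)) ≤
      v * Real.sqrt (1 + s ^ 2) - A * v ^ (2 - m) := by
  have hv0 : 0 < v := lt_of_lt_of_le hr₀ hv
  have hm2 : 0 < m - 2 := by linarith
  have hR : 0 < r₀ ^ (m - 1) := Real.rpow_pos_of_pos hr₀ _
  have hD : 0 < A + (m - 2) * r₀ ^ (m - 1) := by positivity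
  have hΦ : 1 ≤ Real.sqrt (1 + s ^ 2) := by
    have := Real.sqrt_le_sqrt (show (1:ℝ) ≤ 1 + s ^ 2 by nlinarith)
    simpa using this
  have hw : 0 < v ^ (2 - m) := Real.rpow_pos_of_pos hv0 _
  have hRv : r₀ ^ (m - 1) ≤ v ^ (m - 1) :=
    Real.rpow_le_rpow hr₀.le hv (by linarith)
  have hmul : v ^ (m - 1) * v ^ (2 - m) = v := by
    rw [← Real.rpow_add hv0]
    norm_num
  have hkey : r₀ ^ (m - 1) * v ^ (2 - m) ≤ v := by
    calc r₀ ^ (m - 1) * v ^ (2 - m) ≤ v ^ (m - 1) * v ^ (2 - m) := by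
          exact mul_le_mul_of_nonneg_right hRv hw.le
      _ = v := hmul
  rw [hK₁, div_mul_eq_mul_div, div_le_iff₀ hD]
  have hexp : (m - 2) * (r₀ ^ (m - 1) - A) *
      (v * Real.sqrt (1 + s ^ 2) + A / (m - 2) * v ^ (2 - m)) =
      (m - 2) * (r₀ ^ (m - 1) - A) * (v * Real.sqrt (1 + s ^ 2)) +
      (r₀ ^ (m - 1) - A) * (A * v ^ (2 - m)) := by
    field_simp
  rw [hexp]
  nlinarith [mul_le_mul_of_nonneg_left hkey hA,
    mul_le_mul_of_nonneg_left hΦ (mul_nonneg hA hv0.le)]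
end

section
/- Let L > 0, r₀ > 0, m > 2, A ≥ 0, and let v : [0,L] → ℝ be continuously differentiable with v ≥ r₀ and ∫₀^L v² dξ = M. Define E(v) = ∫₀^L [ v(1+v'²)^{1/2} + (A/(m−2)) v^{2−m} ] dξ and M-bar = M/L. Then E(v) ≥ (r₀ + (A/(m−2)) M-bar^{−(m−2)/2}) L. -/
/-- Tangent line inequality for `x ↦ x ^ (-p)` at `c`, via weighted AM-GM. -/
lemma tangent_rpow_neg (p c x : ℝ) (hp : 0 < p) (hc : 0 < c) (hx : 0 < x) :
    (1 + p) * c ^ (-p) ≤ x ^ (-p) + p * c ^ (-p - 1) * x := by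
  have h1p : (0:ℝ) < 1 + p := by linarith
  set w₁ : ℝ := 1 / (1 + p) with hw₁def
  set w₂ : ℝ := p / (1 + p) with hw₂def
  have hw₁ : 0 ≤ w₁ := by positivity
  have hw₂ : 0 ≤ w₂ := by positivity
  have hw : w₁ + w₂ = 1 := by
    rw [hw₁def, hw₂def, ← add_div, div_self h1p.ne']
  have hp₁ : (0:ℝ) ≤ (1 + p) * x ^ (-p) := by positivity
  have hp₂ : (0:ℝ) ≤ (1 + p) * (c ^ (-p - 1) * x) := by positivity
  have key := Real.geom_mean_le_arith_mean2_weighted hw₁ hw₂ hp₁ hp₂ hw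
  have e1 : ((1 + p) * x ^ (-p)) ^ w₁ = (1 + p) ^ w₁ * x ^ (-p * w₁) := by
    rw [Real.mul_rpow h1p.le (Real.rpow_nonneg hx.le _), ← Real.rpow_mul hx.le]
  have e2 : ((1 + p) * (c ^ (-p - 1) * x)) ^ w₂
      = (1 + p) ^ w₂ * (c ^ ((-p - 1) * w₂) * x ^ w₂) := by
    rw [Real.mul_rpow h1p.le (by positivity),
      Real.mul_rpow (Real.rpow_nonneg hc.le _) hx.le, ← Real.rpow_mul hc.le]
  have eLHS : ((1 + p) * x ^ (-p)) ^ w₁ * ((1 + p) * (c ^ (-p - 1) * x)) ^ w₂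
      = (1 + p) * c ^ (-p) := by
    rw [e1, e2]
    have h1 : (1 + p) ^ w₁ * (1 + p) ^ w₂ = 1 + p := by
      rw [← Real.rpow_add h1p, hw, Real.rpow_one]
    have h2 : x ^ (-p * w₁) * x ^ w₂ = 1 := by
      rw [← Real.rpow_add hx]
      have : -p * w₁ + w₂ = 0 := by
        rw [hw₁def, hw₂def]; field_simp; ring
      rw [this, Real.rpow_zero]
    have h3 : (-p - 1) * w₂ = -p := by
      rw [hw₂def]; field_simp; ring
    calc (1 + p) ^ w₁ * x ^ (-p * w₁) * ((1 + p) ^ w₂ * (c ^ ((-p - 1) * w₂) * x ^ w₂))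
        = ((1 + p) ^ w₁ * (1 + p) ^ w₂) * (x ^ (-p * w₁) * x ^ w₂) * c ^ ((-p - 1) * w₂) := by
          ring
      _ = (1 + p) * c ^ (-p) := by rw [h1, h2, h3]; ring
  have eRHS : w₁ * ((1 + p) * x ^ (-p)) + w₂ * ((1 + p) * (c ^ (-p - 1) * x))
      = x ^ (-p) + p * c ^ (-p - 1) * x := by
    rw [hw₁def, hw₂def]; field_simp
  rw [eLHS, eRHS] at key
  exact key

theorem stmt_12 (L r₀ m A M : ℝ) (hL : 0 < L) (hr₀ : 0 < r₀) (hm : 2 < m)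
    (hA : 0 ≤ A)
    (v v' : ℝ → ℝ)
    (hv : ∀ ξ ∈ Set.Icc 0 L, HasDerivAt v (v' ξ) ξ)
    (hv' : ContinuousOn v' (Set.Icc 0 L))
    (hvr₀ : ∀ ξ ∈ Set.Icc 0 L, r₀ ≤ v ξ)
    (hM : ∫ ξ in (0:ℝ)..L, (v ξ) ^ 2 = M) :
    (r₀ + (A / (m - 2)) * (M / L) ^ (-(m - 2) / 2)) * L ≤
      ∫ ξ in (0:ℝ)..L,
        (v ξ * Real.sqrt (1 + (v' ξ) ^ 2) + (A / (m - 2)) * (v ξ) ^ (2 - m)) := by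
  set p : ℝ := (m - 2) / 2 with hpdef
  have hp : 0 < p := by rw [hpdef]; linarith
  set a : ℝ := A / (m - 2) with hadef
  have ha : 0 ≤ a := div_nonneg hA (by linarith)
  have huIcc : Set.uIcc (0:ℝ) L = Set.Icc 0 L := Set.uIcc_of_le hL.le
  have hvc : ContinuousOn v (Set.Icc 0 L) := fun ξ hξ =>
    (hv ξ hξ).continuousAt.continuousWithinAt
  have hvpos : ∀ ξ ∈ Set.Icc 0 L, 0 < v ξ := fun ξ hξ => lt_of_lt_of_le hr₀ (hvr₀ ξ hξ)
  -- integrability of v²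
  have I1 : IntervalIntegrable (fun ξ => (v ξ) ^ 2) MeasureTheory.volume 0 L := by
    apply ContinuousOn.intervalIntegrable
    rw [huIcc]; exact hvc.pow 2
  -- positivity of M
  have hMpos : 0 < M := by
    have hmono : r₀ ^ 2 * L ≤ M := by
      rw [← hM]
      calc r₀ ^ 2 * L = ∫ _ξ in (0:ℝ)..L, r₀ ^ 2 := by
            rw [intervalIntegral.integral_const]; simp [smul_eq_mul]; ring
        _ ≤ ∫ ξ in (0:ℝ)..L, (v ξ) ^ 2 := by
            apply intervalIntegral.integral_mono_on hL.le intervalIntegrable_const I1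
            intro ξ hξ
            have := hvr₀ ξ hξ
            nlinarith
    nlinarith [mul_pos (mul_pos hr₀ hr₀) hL]
  set c : ℝ := M / L with hcdef
  have hc : 0 < c := div_pos hMpos hL
  -- the comparison function
  set K₁ : ℝ := r₀ + a * ((1 + p) * c ^ (-p)) with hK₁def
  set K₂ : ℝ := -(a * p * c ^ (-p - 1)) with hK₂def
  have Ig : IntervalIntegrable (fun ξ => K₁ + K₂ * (v ξ) ^ 2) MeasureTheory.volume 0 L :=
    intervalIntegrable_const.add (I1.const_mul K₂)
  have If : IntervalIntegrable
      (fun ξ => v ξ * Real.sqrt (1 + (v' ξ) ^ 2) + a * (v ξ) ^ (2 - m))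
      MeasureTheory.volume 0 L := by
    apply ContinuousOn.intervalIntegrable
    rw [huIcc]
    apply ContinuousOn.add
    · exact hvc.mul ((continuousOn_const.add (hv'.pow 2)).sqrt)
    · exact continuousOn_const.mul
        (hvc.rpow_const (fun ξ hξ => Or.inl (hvpos ξ hξ).ne'))
  -- pointwise bound
  have hpoint : ∀ ξ ∈ Set.Icc 0 L,
      K₁ + K₂ * (v ξ) ^ 2 ≤
        v ξ * Real.sqrt (1 + (v' ξ) ^ 2) + a * (v ξ) ^ (2 - m) := by
    intro ξ hξ
    have hx : 0 < v ξ := hvpos ξ hξ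
    have hsqrt : 1 ≤ Real.sqrt (1 + (v' ξ) ^ 2) := by
      have h := Real.sqrt_le_sqrt (show (1:ℝ) ≤ 1 + (v' ξ) ^ 2 by nlinarith [sq_nonneg (v' ξ)])
      simpa using h
    have h1 : r₀ ≤ v ξ * Real.sqrt (1 + (v' ξ) ^ 2) := by
      calc r₀ ≤ v ξ := hvr₀ ξ hξ
        _ = v ξ * 1 := by ring
        _ ≤ v ξ * Real.sqrt (1 + (v' ξ) ^ 2) :=
            mul_le_mul_of_nonneg_left hsqrt hx.le
    have hx2 : (0:ℝ) < (v ξ) ^ 2 := by positivity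
    have htan := tangent_rpow_neg p c ((v ξ) ^ 2) hp hc hx2
    have hxid : ((v ξ) ^ 2 : ℝ) ^ (-p) = (v ξ) ^ (2 - m) := by
      rw [← Real.rpow_natCast (v ξ) 2, ← Real.rpow_mul hx.le]
      congr 1
      rw [hpdef]; push_cast; ring
    have h2 : a * ((1 + p) * c ^ (-p)) - (a * p * c ^ (-p - 1)) * (v ξ) ^ 2
        ≤ a * (v ξ) ^ (2 - m) := by
      rw [← hxid]
      nlinarith [mul_le_mul_of_nonneg_left htan ha]
    rw [hK₁def, hK₂def]
    linarith
  -- integrate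
  have hInt : ∫ ξ in (0:ℝ)..L, (K₁ + K₂ * (v ξ) ^ 2) ≤
      ∫ ξ in (0:ℝ)..L,
        (v ξ * Real.sqrt (1 + (v' ξ) ^ 2) + a * (v ξ) ^ (2 - m)) :=
    intervalIntegral.integral_mono_on hL.le Ig If hpoint
  have hIntEq : ∫ ξ in (0:ℝ)..L, (K₁ + K₂ * (v ξ) ^ 2) = K₁ * L + K₂ * M := by
    rw [intervalIntegral.integral_add intervalIntegrable_const (I1.const_mul K₂),
      intervalIntegral.integral_const, intervalIntegral.integral_const_mul, hM]
    simp [smul_eq_mul]; ring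
  -- algebra on the lower bound
  have hMeq : M = c * L := by rw [hcdef]; field_simp
  have hcc : c ^ (-p - 1) * c = c ^ (-p) := by
    rw [← Real.rpow_add_one hc.ne']
    ring_nf
  have hfinal : (r₀ + a * c ^ (-(m - 2) / 2)) * L = K₁ * L + K₂ * M := by
    have hexp : -(m - 2) / 2 = -p := by rw [hpdef]; ring
    have hMc : c ^ (-p - 1) * M = c ^ (-p) * L := by
      rw [hMeq]; linear_combination L * hcc
    rw [hexp, hK₁def, hK₂def]
    linear_combination (a * p) * hMc
  rw [hfinal]
  exact hIntEq.symm.trans_le hInt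
end

section
/- Let v be a C¹ L-periodic function with v ≥ r₀ > 0, and define J(v) = (Φ'(v'))' − v^{-1} f(v') + A v^{-m} where f(z) = (1+z²)^{-1/2}, Φ'(z) = z f(z), and v is C². Then ∫₀^L (v²)' · J(v) dξ = 0. -/
noncomputable def f (z : ℝ) : ℝ := (Real.sqrt (1 + z ^ 2))⁻¹

lemma f_eq (z : ℝ) : f z = (1 + z ^ 2) ^ (-(1/2) : ℝ) := by
  have hpos : (0:ℝ) < 1 + z ^ 2 := by positivity
  rw [f, Real.sqrt_eq_rpow, ← Real.rpow_neg hpos.le]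

lemma f_hasDeriv (z : ℝ) : HasDerivAt f (-z * (1 + z ^ 2) ^ (-(3/2) : ℝ)) z := by
  have hpos : (0:ℝ) < 1 + z ^ 2 := by positivity
  have h1 : HasDerivAt (fun z : ℝ => 1 + z ^ 2) (2 * z) z := by
    simpa using (hasDerivAt_pow 2 z).const_add 1
  have h2 : HasDerivAt (fun y : ℝ => y ^ (-(1/2) : ℝ))
      (-(1/2) * (1 + z ^ 2) ^ (-(1/2) - 1 : ℝ)) (1 + z ^ 2) :=
    Real.hasDerivAt_rpow_const (Or.inl hpos.ne')
  have h3 := h2.comp z h1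
  have heq : f = fun z : ℝ => (1 + z ^ 2) ^ (-(1/2) : ℝ) := funext f_eq
  rw [heq]
  convert h3 using 1
  rfl
  rfl
  rfl
  have : (-(1/2) - 1 : ℝ) = -(3/2) := by norm_num
  rw [this]; ring

lemma rpow_half_split {c : ℝ} (hc : 0 < c) :
    c ^ (-(1/2) : ℝ) = c * c ^ (-(3/2) : ℝ) := by
  have : (-(1/2) : ℝ) = 1 + -(3/2) := by norm_num
  rw [this, Real.rpow_add hc, Real.rpow_one]

theorem stmt_13 (L r₀ A m : ℝ) (hL : 0 < L) (hr₀ : 0 < r₀)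
    (v v' v'' : ℝ → ℝ)
    (hv : ∀ ξ, HasDerivAt v (v' ξ) ξ)
    (hv' : ∀ ξ, HasDerivAt v' (v'' ξ) ξ)
    (hv'' : Continuous v'')
    (hvr₀ : ∀ ξ, r₀ ≤ v ξ)
    (hper : v 0 = v L) (hper' : v' 0 = v' L)
    (J : ℝ → ℝ)
    (hJ : ∀ ξ, J ξ = deriv (fun x => v' x * f (v' x)) ξ
          - f (v' ξ) / v ξ + A * (v ξ) ^ (-m)) :
    ∫ ξ in (0:ℝ)..L, (2 * v ξ * v' ξ) * J ξ = 0 := by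
  have hvpos : ∀ ξ, 0 < v ξ := fun ξ => lt_of_lt_of_le hr₀ (hvr₀ ξ)
  have hcpos : ∀ ξ, (0:ℝ) < 1 + (v' ξ) ^ 2 := fun ξ => by positivity
  -- derivative of the g = v' f(v') term
  have hg : ∀ ξ, HasDerivAt (fun x => v' x * f (v' x))
      (v'' ξ * (1 + (v' ξ) ^ 2) ^ (-(3/2) : ℝ)) ξ := by
    intro ξ
    have hfc := (f_hasDeriv (v' ξ)).comp ξ (hv' ξ)
    have h := (hv' ξ).mul hfc
    convert h using 1
    rfl
    rfl
    rfl
    simp only [Function.comp_apply, f_eq, rpow_half_split (hcpos ξ)]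
    ring
  have hJ' : ∀ ξ, J ξ = v'' ξ * (1 + (v' ξ) ^ 2) ^ (-(3/2) : ℝ)
      - f (v' ξ) / v ξ + A * (v ξ) ^ (-m) := by
    intro ξ; rw [hJ ξ, (hg ξ).deriv]
  -- the antiderivative
  set F : ℝ → ℝ := fun x => -2 * v x * f (v' x) +
      (if m = 2 then 2 * A * Real.log (v x) else 2 * A / (2 - m) * (v x) ^ (2 - m)) with hF_def
  have hF : ∀ ξ, HasDerivAt F ((2 * v ξ * v' ξ) * J ξ) ξ := by
    intro ξ
    have hfc := (f_hasDeriv (v' ξ)).comp ξ (hv' ξ)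
    have h1 : HasDerivAt (fun x => -2 * v x * f (v' x))
        (-2 * v' ξ * f (v' ξ) + -2 * v ξ * (-(v' ξ) * (1 + (v' ξ) ^ 2) ^ (-(3/2) : ℝ) * v'' ξ)) ξ := by
      have := (((hv ξ).const_mul (-2)).mul hfc)
      exact this
    have hvm : (v ξ) ^ (-m) * v ξ = (v ξ) ^ (1 - m) := by
      rw [show (1 - m : ℝ) = -m + 1 by ring, Real.rpow_add (hvpos ξ), Real.rpow_one]
    by_cases hm : m = 2
    · have h2 : HasDerivAt (fun x => 2 * A * Real.log (v x))
          (2 * A * ((v ξ)⁻¹ * v' ξ)) ξ := by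
        exact (((Real.hasDerivAt_log (hvpos ξ).ne').comp ξ (hv ξ)).const_mul (2 * A))
      have hsum := h1.add h2
      have hFeq : F = fun x => -2 * v x * f (v' x) + 2 * A * Real.log (v x) := by
        funext x; simp [hF_def, hm]
      rw [hFeq]
      convert hsum using 1
      rfl
      rfl
      rfl
      rw [hJ' ξ, f_eq]
      have hvm2 : (v ξ) ^ (-m) = ((v ξ) * (v ξ))⁻¹ := by
        rw [hm, show (-(2:ℝ)) = ((-2 : ℤ) : ℝ) by norm_num, Real.rpow_intCast]
        rw [zpow_neg, zpow_two]
      rw [hvm2]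
      have hvne := (hvpos ξ).ne'
      field_simp
      ring
    · have hne2 : (2 - m : ℝ) ≠ 0 := fun h => hm (by linarith)
      have h2 : HasDerivAt (fun x => 2 * A / (2 - m) * (v x) ^ (2 - m))
          (2 * A / (2 - m) * ((2 - m) * (v ξ) ^ (2 - m - 1) * v' ξ)) ξ := by
        exact (((Real.hasDerivAt_rpow_const (p := 2 - m) (Or.inl (hvpos ξ).ne')).comp ξ (hv ξ)).const_mul (2 * A / (2 - m)))
      have hsum := h1.add h2
      have hFeq : F = fun x => -2 * v x * f (v' x) + 2 * A / (2 - m) * (v x) ^ (2 - m) := by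
        funext x; simp [hF_def, hm]
      rw [hFeq]
      convert hsum using 1
      rfl
      rfl
      rfl
      rw [hJ' ξ, f_eq]
      rw [show (2 - m - 1 : ℝ) = 1 - m by ring, ← hvm]
      have hvne := (hvpos ξ).ne'
      field_simp
      ring
  -- continuity of the integrand
  have hcv : Continuous v := continuous_iff_continuousAt.mpr fun x => (hv x).continuousAt
  have hcv' : Continuous v' := continuous_iff_continuousAt.mpr fun x => (hv' x).continuousAt
  have hcont : Continuous (fun ξ => (2 * v ξ * v' ξ) * J ξ) := by
    have hJcont : Continuous J := by
      have : J = fun ξ => v'' ξ * (1 + (v' ξ) ^ 2) ^ (-(3/2) : ℝ)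
          - (1 + (v' ξ) ^ 2) ^ (-(1/2) : ℝ) / v ξ + A * (v ξ) ^ (-m) := by
        funext ξ; rw [hJ' ξ, f_eq]
      rw [this]
      apply Continuous.add
      · apply Continuous.sub
        · exact hv''.mul (Continuous.rpow_const (by continuity) fun x => Or.inl (hcpos x).ne')
        · exact (Continuous.rpow_const (by continuity) fun x => Or.inl (hcpos x).ne').div hcv
            fun x => (hvpos x).ne'
      · exact continuous_const.mul (Continuous.rpow_const hcv fun x => Or.inl (hvpos x).ne')
    exact ((continuous_const.mul hcv).mul hcv').mul hJcont
  rw [intervalIntegral.integral_eq_sub_of_hasDerivAt (fun x _ => hF x)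
    (hcont.intervalIntegrable 0 L)]
  simp only [hF_def, hper, hper']
  ring
end

section
/- Suppose v is a positive C² solution of (Φ'(v'))' − f(v')/v + A v^{−m} = λ on an interval where v' ≠ 0, with f(z) = (1+z²)^{−1/2}, Φ'(z) = z f(z), m > 2, A ≥ 0, λ ∈ ℝ. Then the quantity v·f(v') + (A/(m−2)) v^{2−m} + (λ/2) v² is constant along the solution; equivalently f(v') = (A/(2−m)) v^{1−m} − (λ/2) v + C₀ v^{−1} for some constant C₀. -/
lemma hasDerivAt_f (z : ℝ) : HasDerivAt f (-(z * f z ^ 3)) z := by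
  have hu : HasDerivAt (fun z : ℝ => 1 + z ^ 2) (2 * z) z := by
    simpa using ((hasDerivAt_pow 2 z).const_add 1)
  have hs : HasDerivAt (fun z : ℝ => Real.sqrt (1 + z ^ 2))
      (2 * z / (2 * Real.sqrt (1 + z ^ 2))) z := by
    simpa [div_eq_mul_inv, mul_comm, Function.comp_def] using
      (Real.hasDerivAt_sqrt (by positivity : (1 : ℝ) + z ^ 2 ≠ 0)).comp z hu
  have hpos : 0 < Real.sqrt (1 + z ^ 2) := Real.sqrt_pos.2 (by positivity)
  have := hs.inv hpos.ne'
  refine this.congr_deriv ?_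
  symm
  have hsq : Real.sqrt (1 + z ^ 2) ^ 2 = 1 + z ^ 2 := Real.sq_sqrt (by positivity)
  simp only [f]
  field_simp

theorem stmt_14 (a b m A lam : ℝ) (hab : a < b) (hm : 2 < m) (hA : 0 ≤ A)
    (v v' v'' : ℝ → ℝ)
    (hv : ∀ x ∈ Set.Ioo a b, HasDerivAt v (v' x) x)
    (hv' : ∀ x ∈ Set.Ioo a b, HasDerivAt v' (v'' x) x)
    (hpos : ∀ x ∈ Set.Ioo a b, 0 < v x)
    (hne : ∀ x ∈ Set.Ioo a b, v' x ≠ 0)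
    (hODE : ∀ x ∈ Set.Ioo a b,
      f (v' x) ^ 3 * v'' x - f (v' x) / v x + A * (v x) ^ (-m) = lam) :
    (∃ c : ℝ, ∀ x ∈ Set.Ioo a b,
      v x * f (v' x) + (A / (m - 2)) * (v x) ^ (2 - m) + (lam / 2) * (v x) ^ 2 = c) ∧
    (∃ C₀ : ℝ, ∀ x ∈ Set.Ioo a b,
      f (v' x) = (A / (2 - m)) * (v x) ^ (1 - m) - (lam / 2) * v x + C₀ * (v x)⁻¹) := by
  have hm2 : m - 2 ≠ 0 := by linarith
  set E : ℝ → ℝ := fun x =>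
    v x * f (v' x) + (A / (m - 2)) * (v x) ^ (2 - m) + (lam / 2) * (v x) ^ 2 with hE
  have hEderiv : ∀ x ∈ Set.Ioo a b, HasDerivAt E 0 x := by
    intro x hx
    have hv0 : v x ≠ 0 := (hpos x hx).ne'
    have h1 : HasDerivAt (fun y => v y * f (v' y))
        (v' x * f (v' x) + v x * (-(v' x * f (v' x) ^ 3) * v'' x)) x :=
      (hv x hx).mul ((hasDerivAt_f (v' x)).comp x (hv' x hx))
    have h2 : HasDerivAt (fun y => (v y) ^ (2 - m))
        ((2 - m) * (v x) ^ (2 - m - 1) * v' x) x := by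
      simpa [mul_assoc, Function.comp_def] using
        (Real.hasDerivAt_rpow_const (Or.inl hv0)).comp x (hv x hx)
    have h3 : HasDerivAt (fun y => (v y) ^ 2) (2 * v x * v' x) x := by
      simpa [mul_comm, mul_assoc] using (hv x hx).fun_pow 2
    have hD : HasDerivAt E
        ((v' x * f (v' x) + v x * (-(v' x * f (v' x) ^ 3) * v'' x)) +
          (A / (m - 2)) * ((2 - m) * (v x) ^ (2 - m - 1) * v' x) +
          (lam / 2) * (2 * v x * v' x)) x :=
      (h1.add ((h2.const_mul _))).add (h3.const_mul _)
    convert hD using 1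
    have hODEx := hODE x hx
    have hkey : v x * (f (v' x) ^ 3 * v'' x) = lam * v x + f (v' x) - A * v x ^ (1 - m) := by
      have hpow : v x ^ (1 - m) = v x ^ (-m) * v x := by
        rw [show (1 : ℝ) - m = -m + 1 by ring, Real.rpow_add_one hv0]
      rw [hpow]
      field_simp at hODEx
      linarith [hODEx]
    have hpow2 : v x ^ (2 - m - 1) = v x ^ (1 - m) := by
      rw [show (2 : ℝ) - m - 1 = 1 - m by ring]
    rw [hpow2]
    have hinv : (m - 2) * (m - 2)⁻¹ = 1 := mul_inv_cancel₀ hm2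
    linear_combination v' x * hkey + (A * v x ^ (1 - m) * v' x) * hinv
  obtain ⟨x₀, hx₀⟩ : ∃ x₀, x₀ ∈ Set.Ioo a b := ⟨(a + b) / 2, by constructor <;> linarith⟩
  have hconst : ∀ x ∈ Set.Ioo a b, E x = E x₀ := by
    intro x hx
    refine (convex_Ioo a b).is_const_of_fderivWithin_eq_zero
      (fun y hy => (hEderiv y hy).differentiableAt.differentiableWithinAt) ?_ hx hx₀
    intro y hy
    rw [fderivWithin_of_isOpen isOpen_Ioo hy, (hEderiv y hy).hasFDerivAt.fderiv]
    ext
    simp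
  set c := E x₀ with hc
  refine ⟨⟨c, hconst⟩, ⟨c, ?_⟩⟩
  intro x hx
  have hv0 : v x ≠ 0 := (hpos x hx).ne'
  have h : v x * f (v' x) + (A / (m - 2)) * (v x) ^ (2 - m) + (lam / 2) * (v x) ^ 2 = c :=
    hconst x hx
  have hpow : v x ^ (2 - m) = v x ^ (1 - m) * v x := by
    rw [show (2 : ℝ) - m = (1 - m) + 1 by ring, Real.rpow_add_one hv0]
  rw [hpow] at h
  have hinv : v x * (v x)⁻¹ = 1 := mul_inv_cancel₀ hv0
  have hst : (2 - m)⁻¹ = -(m - 2)⁻¹ := by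
    rw [show (2 : ℝ) - m = -(m - 2) by ring, inv_neg]
  linear_combination (v x)⁻¹ * h -
    (f (v' x) + lam / 2 * v x + A * v x ^ (1 - m) * (m - 2)⁻¹) * hinv -
    (A * v x ^ (1 - m)) * hst
end
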